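/- With Q̄ the pasting of Q, Q₁, Q₂ at σ along Λ as above: if S is a nonnegative Q₁-local martingale, a nonnegative Q₂-local martingale, a nonnegative Q-local martingale, and σ is a stopping time such that E_{Q₁}[S_T | F_σ] < S_σ on a set of positive Q₁-probability contained in Λ, while E_{Q₂}[S_T | F_σ] ≤ S_σ Q₂-a.s., then there exists a stopping time τ ≤ σ with Q̄(E_{Q̄}[S_T | F_τ] < S_τ) > 0; in particular S is a strict Q̄-local martingale (not a true Q̄-martingale). -/

import Mathlib

open MeasureTheory Filter Set
open scoped ENNReal NNReal

noncomputable section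

/-- Local martingale via a localizing sequence of stopping times. -/
def IsLocalMartingale {Ω : Type*} {m0 : MeasurableSpace Ω} (ℱ : Filtration ℝ m0)
    (X : ℝ → Ω → ℝ) (μ : Measure Ω) : Prop :=
  ∃ τ : ℕ → Ω → ℝ, (∀ n, IsStoppingTime ℱ (fun ω => (τ n ω : WithTop ℝ))) ∧
    (∀ᵐ ω ∂μ, Tendsto (fun n => τ n ω) atTop atTop) ∧
    ∀ n, Martingale (stoppedProcess X (fun ω => (τ n ω : WithTop ℝ))) ℱ μ

/-- A nonnegative local martingale has nonincreasing (generalized) expectations. -/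
theorem super_aux {Ω : Type*} {m0 : MeasurableSpace Ω} (ℱ : Filtration ℝ m0)
    (μ : Measure Ω) [IsProbabilityMeasure μ] (S : ℝ → Ω → ℝ)
    (hadapted : Adapted ℱ S) (hnonneg : ∀ t ω, 0 ≤ S t ω)
    (hloc : IsLocalMartingale ℱ S μ) {t0 t1 : ℝ} (h01 : t0 ≤ t1) :
    ∫⁻ ω, ENNReal.ofReal (S t1 ω) ∂μ ≤ ∫⁻ ω, ENNReal.ofReal (S t0 ω) ∂μ := by
  obtain ⟨τs, hst, htend, hmart⟩ := hloc
  have key : ∀ k : ℕ,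
      (∫⁻ ω, ENNReal.ofReal (min (S t1 ω) k) ∂μ) ≤ ∫⁻ ω, ENNReal.ofReal (S t0 ω) ∂μ := by
    intro k
    set Y : ℕ → ℝ → Ω → ℝ := fun n => stoppedProcess S (fun ω => (τs n ω : WithTop ℝ)) with hY
    have hYnonneg : ∀ n t ω, 0 ≤ Y n t ω := fun n t ω => hnonneg _ ω
    have hYsm : ∀ n t, StronglyMeasurable (Y n t) := fun n t =>
      ((hmart n).stronglyMeasurable t).mono (ℱ.le t)
    have hminsm : ∀ n t, StronglyMeasurable (fun ω => min (Y n t ω) k) := fun n t =>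
      ((hYsm n t).measurable.min measurable_const).stronglyMeasurable
    have hminint : ∀ n t, Integrable (fun ω => min (Y n t ω) k) μ := by
      intro n t
      refine (integrable_const (k : ℝ)).mono' (hminsm n t).aestronglyMeasurable ?_
      refine Eventually.of_forall fun ω => ?_
      rw [Real.norm_eq_abs, abs_of_nonneg (le_min (hYnonneg n t ω) (Nat.cast_nonneg k))]
      exact min_le_right _ _
    have step1 : ∀ n, (∫ ω, min (Y n t1 ω) (k : ℝ) ∂μ) ≤ ∫ ω, min (Y n t0 ω) (k : ℝ) ∂μ := by
      intro n
      have hcond : μ[Y n t1 | ℱ t0] =ᵐ[μ] Y n t0 := (hmart n).condExp_ae_eq h01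
      have h1 : μ[fun ω => min (Y n t1 ω) (k : ℝ) | ℱ t0] ≤ᵐ[μ] Y n t0 := by
        refine (condExp_mono (hminint n t1) ((hmart n).integrable t1)
          (Eventually.of_forall fun ω => min_le_left _ _)).trans ?_
        exact hcond.le
      have h2 : μ[fun ω => min (Y n t1 ω) (k : ℝ) | ℱ t0] ≤ᵐ[μ] fun _ => (k : ℝ) := by
        refine (condExp_mono (hminint n t1) (integrable_const _)
          (Eventually.of_forall fun ω => min_le_right _ _)).trans ?_
        rw [condExp_const (ℱ.le t0)]
      have h3 : μ[fun ω => min (Y n t1 ω) (k : ℝ) | ℱ t0] ≤ᵐ[μ]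
          fun ω => min (Y n t0 ω) (k : ℝ) := by
        filter_upwards [h1, h2] with ω ha hb
        exact le_min ha hb
      calc (∫ ω, min (Y n t1 ω) (k : ℝ) ∂μ)
          = ∫ ω, (μ[fun ω => min (Y n t1 ω) (k : ℝ) | ℱ t0]) ω ∂μ :=
            (integral_condExp (ℱ.le t0)).symm
        _ ≤ ∫ ω, min (Y n t0 ω) (k : ℝ) ∂μ :=
            integral_mono_ae integrable_condExp (hminint n t0) h3
    have hofReal : ∀ n t, (∫⁻ ω, ENNReal.ofReal (min (Y n t ω) k) ∂μ)
        = ENNReal.ofReal (∫ ω, min (Y n t ω) (k : ℝ) ∂μ) := by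
      intro n t
      rw [ofReal_integral_eq_lintegral_ofReal (hminint n t)
        (Eventually.of_forall fun ω => le_min (hYnonneg n t ω) (Nat.cast_nonneg k))]
    have step1' : ∀ n, (∫⁻ ω, ENNReal.ofReal (min (Y n t1 ω) k) ∂μ)
        ≤ ∫⁻ ω, ENNReal.ofReal (min (Y n t0 ω) k) ∂μ := by
      intro n; rw [hofReal, hofReal]; exact ENNReal.ofReal_le_ofReal (step1 n)
    have hconv : ∀ t : ℝ, Tendsto (fun n => ∫⁻ ω, ENNReal.ofReal (min (Y n t ω) k) ∂μ)
        atTop (nhds (∫⁻ ω, ENNReal.ofReal (min (S t ω) k) ∂μ)) := by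
      intro t
      refine tendsto_lintegral_of_dominated_convergence (fun _ => ENNReal.ofReal k)
        (fun n => ((hminsm n t).measurable).ennreal_ofReal) ?_ ?_ ?_
      · intro n
        exact Eventually.of_forall fun ω => ENNReal.ofReal_le_ofReal (min_le_right _ _)
      · simp
      · filter_upwards [htend] with ω hω
        have : ∀ᶠ n in atTop, min (Y n t ω) (k : ℝ) = min (S t ω) (k : ℝ) := by
          filter_upwards [hω.eventually_ge_atTop t] with n hn
          have : Y n t ω = S t ω := by
            simp only [hY, stoppedProcess, ← WithTop.coe_min, min_eq_left hn]; rfl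
          rw [this]
        exact Tendsto.congr' (this.mono fun n hn => (congrArg ENNReal.ofReal hn).symm)
          tendsto_const_nhds
    have hkk : (∫⁻ ω, ENNReal.ofReal (min (S t1 ω) k) ∂μ)
        ≤ ∫⁻ ω, ENNReal.ofReal (min (S t0 ω) k) ∂μ :=
      le_of_tendsto_of_tendsto' (hconv t1) (hconv t0) step1'
    exact hkk.trans (lintegral_mono fun ω => ENNReal.ofReal_le_ofReal (min_le_left _ _))
  have hsup : (fun ω => ENNReal.ofReal (S t1 ω))
      = fun ω => ⨆ k : ℕ, ENNReal.ofReal (min (S t1 ω) k) := by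
    funext ω
    refine le_antisymm ?_ (iSup_le fun k => ENNReal.ofReal_le_ofReal (min_le_left _ _))
    have h1 : ENNReal.ofReal (S t1 ω) = ENNReal.ofReal (min (S t1 ω) (⌈S t1 ω⌉₊ : ℝ)) := by
      rw [min_eq_left (Nat.le_ceil _)]
    rw [h1]
    exact le_iSup (fun k : ℕ => ENNReal.ofReal (min (S t1 ω) k)) ⌈S t1 ω⌉₊
  have hmono : Monotone fun (k : ℕ) (ω : Ω) => ENNReal.ofReal (min (S t1 ω) k) := by
    intro a b hab ω
    exact ENNReal.ofReal_le_ofReal (min_le_min le_rfl (by exact_mod_cast hab))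
  calc (∫⁻ ω, ENNReal.ofReal (S t1 ω) ∂μ)
      = ∫⁻ ω, ⨆ k : ℕ, ENNReal.ofReal (min (S t1 ω) k) ∂μ := by rw [hsup]
    _ = ⨆ k : ℕ, ∫⁻ ω, ENNReal.ofReal (min (S t1 ω) k) ∂μ :=
        lintegral_iSup (fun k => (((hadapted t1).mono (ℱ.le t1) le_rfl).min
          measurable_const).ennreal_ofReal) (fun a b hab ω => hmono hab ω)
    _ ≤ ∫⁻ ω, ENNReal.ofReal (S t0 ω) ∂μ := iSup_le key

/-- Integrals of `m`-measurable functions only depend on the trimmed measure. -/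
theorem integral_trim_congr {Ω : Type*} {m m0 : MeasurableSpace Ω} (hm : m ≤ m0)
    {μ ν : Measure Ω} (h : μ.trim hm = ν.trim hm) {f : Ω → ℝ}
    (hf : StronglyMeasurable[m] f) : ∫ ω, f ω ∂μ = ∫ ω, f ω ∂ν := by
  rw [integral_trim hm hf, integral_trim hm hf, h]

/-- Corollary to Proposition 3.13: if `S` is a strict `Q₁`-local martingale (strictness
witnessed on a subset of `Λ` at `σ`) then the pasting `Q̄` of `Q, Q₁, Q₂` at `σ` along `Λ`
also makes `S` a strict local martingale. -/
theorem stmt6 {Ω : Type*} {m0 : MeasurableSpace Ω} (ℱ : Filtration ℝ m0)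
    (Q Q1 Q2 Qbar : Measure Ω) [IsProbabilityMeasure Q] [IsProbabilityMeasure Q1]
    [IsProbabilityMeasure Q2] [IsProbabilityMeasure Qbar]
    (σ : Ω → ℝ) (hσ : IsStoppingTime ℱ (fun ω => (σ ω : WithTop ℝ))) (hσfin : (Set.range σ).Finite)
    (Λ : Set Ω) (hΛ : MeasurableSet[hσ.measurableSpace] Λ)
    (hQ1σ : ∀ A : Set Ω, MeasurableSet[hσ.measurableSpace] A → Q1 A = Q A)
    (hQ2σ : ∀ A : Set Ω, MeasurableSet[hσ.measurableSpace] A → Q2 A = Q A)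
    (hQbar : ∀ A : Set Ω, MeasurableSet A → (Qbar A).toReal =
      ∫ ω, (MeasureTheory.condExp hσ.measurableSpace Q1 (A.indicator fun _ => (1 : ℝ)) ω
            * Λ.indicator (fun _ => (1 : ℝ)) ω
          + MeasureTheory.condExp hσ.measurableSpace Q2 (A.indicator fun _ => (1 : ℝ)) ω
            * Λᶜ.indicator (fun _ => (1 : ℝ)) ω) ∂Q)
    (S : ℝ → Ω → ℝ) (T : ℝ)
    (hadapted : Adapted ℱ S)
    (hrc : ∀ ω t, ContinuousWithinAt (fun s => S s ω) (Set.Ici t) t)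
    (hnonneg : ∀ t ω, 0 ≤ S t ω)
    (hloc1 : IsLocalMartingale ℱ S Q1)
    (hloc2 : IsLocalMartingale ℱ S Q2)
    (hlocQ : IsLocalMartingale ℱ S Q)
    (hστ0 : ∀ ω, 0 ≤ σ ω) (hστT : ∀ ω, σ ω ≤ T)
    (hstrict : 0 < Q1 {ω | ω ∈ Λ ∧
      MeasureTheory.condExp hσ.measurableSpace Q1 (S T) ω < S (σ ω) ω})
    (hle2 : ∀ᵐ ω ∂Q2, MeasureTheory.condExp hσ.measurableSpace Q2 (S T) ω ≤ S (σ ω) ω) :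
    (∃ τ : Ω → ℝ, ∃ hτ : IsStoppingTime ℱ (fun ω => (τ ω : WithTop ℝ)), (∀ ω, τ ω ≤ σ ω) ∧
      0 < Qbar {ω | MeasureTheory.condExp hτ.measurableSpace Qbar (S T) ω < S (τ ω) ω}) ∧
    ¬ Martingale S ℱ Qbar := by
  have hm : hσ.measurableSpace ≤ m0 := hσ.measurableSpace_le
  have hΛ0 : MeasurableSet Λ := hm Λ hΛ
  -- trimmed measures agree
  have htrim1 : Q1.trim hm = Q.trim hm :=
    @Measure.ext _ hσ.measurableSpace _ _ fun s hs => by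
      rw [trim_measurableSet_eq hm hs, trim_measurableSet_eq hm hs, hQ1σ s hs]
  have htrim2 : Q2.trim hm = Q.trim hm :=
    @Measure.ext _ hσ.measurableSpace _ _ fun s hs => by
      rw [trim_measurableSet_eq hm hs, trim_measurableSet_eq hm hs, hQ2σ s hs]
  -- `Qbar` is the pasted measure
  have hQbarM : Qbar = Q1.restrict Λ + Q2.restrict Λᶜ := by
    refine Measure.ext fun A hA => ?_
    have hRHS : (Q1.restrict Λ + Q2.restrict Λᶜ) A = Q1 (A ∩ Λ) + Q2 (A ∩ Λᶜ) := by
      rw [Measure.add_apply, Measure.restrict_apply hA, Measure.restrict_apply hA]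
    rw [hRHS]
    refine (ENNReal.toReal_eq_toReal_iff' (measure_ne_top _ _)
      (ENNReal.add_ne_top.mpr ⟨measure_ne_top _ _, measure_ne_top _ _⟩)).mp ?_
    rw [hQbar A hA, ENNReal.toReal_add (measure_ne_top _ _) (measure_ne_top _ _)]
    set c1 := MeasureTheory.condExp hσ.measurableSpace Q1 (A.indicator fun _ => (1 : ℝ))
    set c2 := MeasureTheory.condExp hσ.measurableSpace Q2 (A.indicator fun _ => (1 : ℝ))
    have e1 : (fun ω => c1 ω * Λ.indicator (fun _ => (1 : ℝ)) ω) = Λ.indicator c1 := by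
      funext ω; by_cases hω : ω ∈ Λ <;> simp [hω]
    have e2 : (fun ω => c2 ω * Λᶜ.indicator (fun _ => (1 : ℝ)) ω) = Λᶜ.indicator c2 := by
      funext ω; by_cases hω : ω ∈ Λᶜ <;> simp [hω]
    have hsm1 : StronglyMeasurable[hσ.measurableSpace] (Λ.indicator c1) :=
      stronglyMeasurable_condExp.indicator hΛ
    have hsm2 : StronglyMeasurable[hσ.measurableSpace] (Λᶜ.indicator c2) :=
      stronglyMeasurable_condExp.indicator hΛ.compl
    have hint1 : Integrable (Λ.indicator c1) Q := by
      have h1 : Integrable (Λ.indicator c1) Q1 := integrable_condExp.indicator hΛ0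
      have h2 : Integrable (Λ.indicator c1) (Q.trim hm) := by
        rw [← htrim1]; exact h1.trim hm hsm1
      exact integrable_of_integrable_trim hm h2
    have hint2 : Integrable (Λᶜ.indicator c2) Q := by
      have h1 : Integrable (Λᶜ.indicator c2) Q2 := integrable_condExp.indicator hΛ0.compl
      have h2 : Integrable (Λᶜ.indicator c2) (Q.trim hm) := by
        rw [← htrim2]; exact h1.trim hm hsm2
      exact integrable_of_integrable_trim hm h2
    have hAint1 : Integrable (A.indicator fun _ => (1 : ℝ)) Q1 :=
      (integrable_const (1 : ℝ)).indicator hA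
    have hAint2 : Integrable (A.indicator fun _ => (1 : ℝ)) Q2 :=
      (integrable_const (1 : ℝ)).indicator hA
    have hI1 : ∫ ω, Λ.indicator c1 ω ∂Q = (Q1 (A ∩ Λ)).toReal := by
      rw [integral_trim_congr hm htrim1.symm hsm1, integral_indicator hΛ0,
        setIntegral_condExp hm hAint1 hΛ, integral_indicator hA, setIntegral_const,
        measureReal_restrict_apply hA, smul_eq_mul, mul_one, measureReal_def]
    have hI2 : ∫ ω, Λᶜ.indicator c2 ω ∂Q = (Q2 (A ∩ Λᶜ)).toReal := by
      rw [integral_trim_congr hm htrim2.symm hsm2, integral_indicator hΛ0.compl,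
        setIntegral_condExp hm hAint2 hΛ.compl, integral_indicator hA, setIntegral_const,
        measureReal_restrict_apply hA, smul_eq_mul, mul_one, measureReal_def]
    calc ∫ ω, (c1 ω * Λ.indicator (fun _ => (1 : ℝ)) ω
            + c2 ω * Λᶜ.indicator (fun _ => (1 : ℝ)) ω) ∂Q
        = ∫ ω, (Λ.indicator c1 ω + Λᶜ.indicator c2 ω) ∂Q := by
          congr 1; funext ω; rw [← e1, ← e2]
      _ = ∫ ω, Λ.indicator c1 ω ∂Q + ∫ ω, Λᶜ.indicator c2 ω ∂Q := integral_add hint1 hint2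
      _ = (Q1 (A ∩ Λ)).toReal + (Q2 (A ∩ Λᶜ)).toReal := by rw [hI1, hI2]
  -- `Qbar` agrees with `Q` on the σ-algebra of `σ`
  have hQbarQ : ∀ s : Set Ω, MeasurableSet[hσ.measurableSpace] s → Qbar s = Q s := by
    intro s hs
    have hs0 : MeasurableSet s := hm s hs
    rw [hQbarM, Measure.add_apply, Measure.restrict_apply hs0, Measure.restrict_apply hs0,
      hQ1σ _ (hs.inter hΛ), hQ2σ _ (hs.inter hΛ.compl)]
    have := measure_inter_add_diff (μ := Q) s hΛ0
    rw [Set.diff_eq] at this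
    exact this
  have htrimbar : Qbar.trim hm = Q.trim hm :=
    @Measure.ext _ hσ.measurableSpace _ _ fun s hs => by
      rw [trim_measurableSet_eq hm hs, trim_measurableSet_eq hm hs, hQbarQ s hs]
  -- key monotonicity
  have hkey : ∀ s : Set Ω, Q1 (s ∩ Λ) ≤ Qbar s := by
    intro s
    rw [hQbarM]
    calc Q1 (s ∩ Λ) = Q1.restrict Λ s := (Measure.restrict_apply' hΛ0).symm
      _ ≤ Q1.restrict Λ s + Q2.restrict Λᶜ s := self_le_add_right _ _
      _ = (Q1.restrict Λ + Q2.restrict Λᶜ) s := (Measure.add_apply _ _ _).symm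
  by_cases hQbarInt : Integrable (S T) Qbar
  · by_cases hQ1Int : Integrable (S T) Q1
    · -- genuine case: use τ = σ
      set h := MeasureTheory.condExp hσ.measurableSpace Qbar (S T) with hh
      set c1 := MeasureTheory.condExp hσ.measurableSpace Q1 (S T) with hc1
      have hsm_h : StronglyMeasurable[hσ.measurableSpace] h := stronglyMeasurable_condExp
      have hsm_c1 : StronglyMeasurable[hσ.measurableSpace] c1 := stronglyMeasurable_condExp
      set ν := Q1.restrict Λ with hν
      have hνle : ν ≤ Q1 := Measure.restrict_le_self
      have hνQbar : ν ≤ Qbar := by rw [hQbarM]; exact Measure.le_add_right le_rfl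
      have hh_int_ν : Integrable h ν := integrable_condExp.mono_measure hνQbar
      have hc1_int_ν : Integrable c1 ν := integrable_condExp.mono_measure hνle
      have hsetint : ∀ s : Set Ω, MeasurableSet[hσ.measurableSpace] s →
          ∫ ω in s ∩ Λ, h ω ∂Q1 = ∫ ω in s ∩ Λ, c1 ω ∂Q1 := by
        intro s hs
        have hsΛ : MeasurableSet[hσ.measurableSpace] (s ∩ Λ) := hs.inter hΛ
        have hsΛ0 : MeasurableSet (s ∩ Λ) := hm _ hsΛ
        have hres : Qbar.restrict (s ∩ Λ) = Q1.restrict (s ∩ Λ) := by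
          rw [hQbarM, Measure.restrict_add, Measure.restrict_restrict hsΛ0,
            Measure.restrict_restrict hsΛ0]
          have e1 : s ∩ Λ ∩ Λ = s ∩ Λ := by rw [inter_assoc, inter_self]
          have e2 : s ∩ Λ ∩ Λᶜ = ∅ := by rw [inter_assoc, inter_compl_self, inter_empty]
          rw [e1, e2, Measure.restrict_empty, add_zero]
        calc ∫ ω in s ∩ Λ, h ω ∂Q1
            = ∫ ω, (s ∩ Λ).indicator h ω ∂Q1 := (integral_indicator hsΛ0).symm
          _ = ∫ ω, (s ∩ Λ).indicator h ω ∂Qbar :=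
              integral_trim_congr hm (htrim1.trans htrimbar.symm) (hsm_h.indicator hsΛ)
          _ = ∫ ω in s ∩ Λ, h ω ∂Qbar := integral_indicator hsΛ0
          _ = ∫ ω in s ∩ Λ, S T ω ∂Qbar := setIntegral_condExp hm hQbarInt hsΛ
          _ = ∫ ω in s ∩ Λ, S T ω ∂Q1 := by rw [hres]
          _ = ∫ ω in s ∩ Λ, c1 ω ∂Q1 := (setIntegral_condExp hm hQ1Int hsΛ).symm
      have hae : h =ᵐ[ν] c1 := by
        have h1 : Integrable h (ν.trim hm) := hh_int_ν.trim hm hsm_h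
        have h2 : Integrable c1 (ν.trim hm) := hc1_int_ν.trim hm hsm_c1
        refine ae_eq_of_ae_eq_trim (Integrable.ae_eq_of_forall_setIntegral_eq _ _ h1 h2 ?_)
        intro s hs _
        rw [restrict_trim hm ν hs, ← integral_trim hm hsm_h, ← integral_trim hm hsm_c1,
          Measure.restrict_restrict (hm s hs)]
        exact hsetint s hs
      have hnull : Q1 ({ω | ¬ h ω = c1 ω} ∩ Λ) = 0 := by
        have : ν {ω | ¬ h ω = c1 ω} = 0 := ae_iff.mp hae
        rwa [Measure.restrict_apply' hΛ0] at this
      have hpos : 0 < Q1 ({ω | h ω < S (σ ω) ω} ∩ Λ) := by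
        have hsub : {ω | ω ∈ Λ ∧ c1 ω < S (σ ω) ω} ⊆
            ({ω | h ω < S (σ ω) ω} ∩ Λ) ∪ ({ω | ¬ h ω = c1 ω} ∩ Λ) := by
          rintro ω ⟨h1, h2⟩
          by_cases heq : h ω = c1 ω
          · exact Or.inl ⟨by rw [Set.mem_setOf_eq, heq]; exact h2, h1⟩
          · exact Or.inr ⟨heq, h1⟩
        by_contra hcon
        push_neg at hcon
        have hz : Q1 ({ω | h ω < S (σ ω) ω} ∩ Λ) = 0 := le_antisymm hcon zero_le
        have : Q1 {ω | ω ∈ Λ ∧ c1 ω < S (σ ω) ω} = 0 := by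
          refine le_antisymm ?_ zero_le
          calc Q1 {ω | ω ∈ Λ ∧ c1 ω < S (σ ω) ω}
              ≤ Q1 (({ω | h ω < S (σ ω) ω} ∩ Λ) ∪ ({ω | ¬ h ω = c1 ω} ∩ Λ)) :=
                measure_mono hsub
            _ ≤ Q1 ({ω | h ω < S (σ ω) ω} ∩ Λ) + Q1 ({ω | ¬ h ω = c1 ω} ∩ Λ) :=
                measure_union_le _ _
            _ = 0 := by rw [hz, hnull, add_zero]
        exact absurd this (ne_of_gt hstrict)
      have hposbar : 0 < Qbar {ω | h ω < S (σ ω) ω} := lt_of_lt_of_le hpos (hkey _)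
      refine ⟨⟨σ, hσ, fun ω => le_rfl, hposbar⟩, ?_⟩
      intro hM
      have hOS := hM.stoppedValue_ae_eq_condExp_of_le_const_of_countable_range hσ
        (fun ω => WithTop.coe_le_coe.mpr (hστT ω))
        ((hσfin.countable.image (fun x : ℝ => (x : WithTop ℝ))).mono
          (by rintro _ ⟨ω, rfl⟩; exact ⟨σ ω, ⟨ω, rfl⟩, rfl⟩))
      have hz : Qbar {ω | h ω < S (σ ω) ω} = 0 := by
        have h0 : ∀ᵐ ω ∂Qbar, ¬ (h ω < S (σ ω) ω) := by
          filter_upwards [hOS] with ω hω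
          intro hlt
          rw [show stoppedValue S (fun ω => (σ ω : WithTop ℝ)) ω = S (σ ω) ω from rfl] at hω
          rw [hω] at hlt
          exact lt_irrefl _ hlt
        have := ae_iff.mp h0
        simpa [not_not] using this
      exact absurd hz (ne_of_gt hposbar)
    · -- `S T` is not `Q1`-integrable : use τ = 0
      have hΩ : Nonempty Ω := by
        rcases isEmpty_or_nonempty Ω with hE | hNe
        · exfalso
          have h1 : Qbar Set.univ = 1 := measure_univ
          rw [Set.univ_eq_empty_iff.mpr hE, measure_empty] at h1
          exact zero_ne_one h1
        · exact hNe
      obtain ⟨ω0⟩ := hΩ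
      have h0T : (0 : ℝ) ≤ T := le_trans (hστ0 ω0) (hστT ω0)
      have hm0 : ℱ 0 ≤ hσ.measurableSpace := by
        have := IsStoppingTime.measurableSpace_mono (isStoppingTime_const ℱ 0) hσ
          (fun ω => WithTop.coe_le_coe.mpr (hστ0 ω))
        rwa [IsStoppingTime.measurableSpace_const] at this
      have hS0sm : StronglyMeasurable[hσ.measurableSpace] (S 0) := ((hadapted 0).mono hm0 le_rfl).stronglyMeasurable
      have hSTofReal : (fun ω => ‖S T ω‖ₑ) = fun ω => ENNReal.ofReal (S T ω) :=
        funext fun ω => Real.enorm_eq_ofReal (hnonneg T ω)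
      have hinfQ1 : ∫⁻ ω, ENNReal.ofReal (S T ω) ∂Q1 = ⊤ := by
        by_contra hfin
        apply hQ1Int
        refine ⟨((hadapted T).mono (ℱ.le T) le_rfl).aestronglyMeasurable, ?_⟩
        rw [HasFiniteIntegral, hSTofReal]
        exact lt_top_iff_ne_top.mpr hfin
      have hsuper := super_aux ℱ Q1 S hadapted hnonneg hloc1 h0T
      have hinfQ10 : ∫⁻ ω, ENNReal.ofReal (S 0 ω) ∂Q1 = ⊤ :=
        top_le_iff.mp (hinfQ1 ▸ hsuper)
      have hinfbar : ∫⁻ ω, ENNReal.ofReal (S 0 ω) ∂Qbar = ⊤ := by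
        have hmeasm : Measurable[hσ.measurableSpace] fun ω => ENNReal.ofReal (S 0 ω) :=
          hS0sm.measurable.ennreal_ofReal
        rw [← lintegral_trim hm hmeasm, htrimbar, ← htrim1, lintegral_trim hm hmeasm]
        exact hinfQ10
      have hS0nint : ¬ Integrable (S 0) Qbar := by
        intro hint0
        have := hint0.2
        rw [HasFiniteIntegral] at this
        have heq : (fun ω => ‖S 0 ω‖ₑ) = fun ω => ENNReal.ofReal (S 0 ω) :=
          funext fun ω => Real.enorm_eq_ofReal (hnonneg 0 ω)
        rw [heq, hinfbar] at this
        exact lt_irrefl _ this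
      refine ⟨⟨fun _ => 0, isStoppingTime_const ℱ 0, fun ω => hστ0 ω, ?_⟩, ?_⟩
      · set h0 := MeasureTheory.condExp (isStoppingTime_const ℱ 0).measurableSpace Qbar (S T)
          with hh0
        rw [pos_iff_ne_zero]
        intro hzero
        have hae : ∀ᵐ ω ∂Qbar, ¬ (h0 ω < S 0 ω) := by
          rw [ae_iff]
          simpa [not_not] using hzero
        have hle : ∀ᵐ ω ∂Qbar, ENNReal.ofReal (S 0 ω) ≤ ENNReal.ofReal (h0 ω) := by
          filter_upwards [hae] with ω hω
          exact ENNReal.ofReal_le_ofReal (not_lt.mp hω)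
        have hmono := lintegral_mono_ae hle
        have hfin : ∫⁻ ω, ENNReal.ofReal (h0 ω) ∂Qbar < ⊤ := by
          have hi : Integrable h0 Qbar := integrable_condExp
          refine lt_of_le_of_lt (lintegral_mono fun ω => Real.ofReal_le_enorm _) hi.2
        rw [hinfbar] at hmono
        exact absurd (lt_of_le_of_lt hmono hfin) (lt_irrefl _)
      · intro hM
        exact hS0nint (hM.integrable 0)
  · -- `S T` is not `Qbar`-integrable : condExp is zero
    have hzero : MeasureTheory.condExp hσ.measurableSpace Qbar (S T) = 0 :=
      condExp_of_not_integrable hQbarInt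
    refine ⟨⟨σ, hσ, fun ω => le_rfl, ?_⟩, fun hM => hQbarInt (hM.integrable T)⟩
    rw [hzero]
    have hc1 : 0 ≤ᵐ[Q1] MeasureTheory.condExp hσ.measurableSpace Q1 (S T) :=
      condExp_nonneg (Eventually.of_forall (hnonneg T))
    have hN : Q1 {ω | ¬ (0 ≤ MeasureTheory.condExp hσ.measurableSpace Q1 (S T) ω)} = 0 :=
      ae_iff.mp hc1
    have hsub : {ω | ω ∈ Λ ∧ MeasureTheory.condExp hσ.measurableSpace Q1 (S T) ω < S (σ ω) ω}
        ⊆ ({ω | (0 : Ω → ℝ) ω < S (σ ω) ω} ∩ Λ)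
          ∪ {ω | ¬ (0 ≤ MeasureTheory.condExp hσ.measurableSpace Q1 (S T) ω)} := by
      rintro ω ⟨h1, h2⟩
      by_cases hge : 0 ≤ MeasureTheory.condExp hσ.measurableSpace Q1 (S T) ω
      · exact Or.inl ⟨lt_of_le_of_lt hge h2, h1⟩
      · exact Or.inr hge
    have hpos : 0 < Q1 ({ω | (0 : Ω → ℝ) ω < S (σ ω) ω} ∩ Λ) := by
      by_contra hcon
      push_neg at hcon
      have hz : Q1 ({ω | (0 : Ω → ℝ) ω < S (σ ω) ω} ∩ Λ) = 0 :=
        le_antisymm hcon zero_le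
      have : Q1 {ω | ω ∈ Λ ∧
          MeasureTheory.condExp hσ.measurableSpace Q1 (S T) ω < S (σ ω) ω} = 0 := by
        refine le_antisymm ?_ zero_le
        calc Q1 {ω | ω ∈ Λ ∧ MeasureTheory.condExp hσ.measurableSpace Q1 (S T) ω < S (σ ω) ω}
            ≤ Q1 (({ω | (0 : Ω → ℝ) ω < S (σ ω) ω} ∩ Λ)
              ∪ {ω | ¬ (0 ≤ MeasureTheory.condExp hσ.measurableSpace Q1 (S T) ω)}) :=
              measure_mono hsub
          _ ≤ Q1 ({ω | (0 : Ω → ℝ) ω < S (σ ω) ω} ∩ Λ)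
              + Q1 {ω | ¬ (0 ≤ MeasureTheory.condExp hσ.measurableSpace Q1 (S T) ω)} :=
              measure_union_le _ _
          _ = 0 := by rw [hz, hN, add_zero]
      exact absurd this (ne_of_gt hstrict)
    exact lt_of_lt_of_le hpos (hkey _)

end
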